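/- The unique positive root λ* of λ = (5 + e^{-3λ})/3 is strictly greater than 5/3, and satisfies 1.6688 < λ* < 1.669. -/
import Mathlib

lemma exp5_lt : Real.exp 5 < 148.42 := by
  have h1 : Real.exp 1 < 2.7182818286 := Real.exp_one_lt_d9
  have h5 : Real.exp 5 = (Real.exp 1) ^ 5 := by
    rw [← Real.exp_nat_mul]; norm_num
  rw [h5]
  calc (Real.exp 1)^5 < 2.7182818286^5 := by
        exact pow_lt_pow_left₀ h1 (Real.exp_pos 1).le (by norm_num)
    _ < 148.42 := by norm_num

lemma exp5_gt : 148.41 < Real.exp 5 := by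
  have h1 : (2.7182818283 : ℝ) < Real.exp 1 := Real.exp_one_gt_d9
  have h5 : Real.exp 5 = (Real.exp 1) ^ 5 := by
    rw [← Real.exp_nat_mul]; norm_num
  rw [h5]
  calc (148.41 : ℝ) < 2.7182818283^5 := by norm_num
    _ < (Real.exp 1)^5 := by
        exact pow_lt_pow_left₀ h1 (by norm_num) (by norm_num)

lemma expA : Real.exp 5.0064 < 156.25 := by
  have hsplit : Real.exp 5.0064 = Real.exp 5 * Real.exp 0.0064 := by
    rw [← Real.exp_add]; norm_num
  have hsmall : Real.exp 0.0064 ≤ 1 / 0.9936 := by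
    have := Real.add_one_le_exp (-0.0064 : ℝ)
    have hpos : (0:ℝ) < Real.exp 0.0064 := Real.exp_pos _
    rw [Real.exp_neg] at this
    rw [le_div_iff₀ (by norm_num)]
    have hmul : Real.exp 0.0064 * (Real.exp 0.0064)⁻¹ = 1 :=
      mul_inv_cancel₀ (Real.exp_ne_zero _)
    nlinarith [Real.exp_pos (0.0064 : ℝ)]
  rw [hsplit]
  calc Real.exp 5 * Real.exp 0.0064 ≤ Real.exp 5 * (1/0.9936) :=
        mul_le_mul_of_nonneg_left hsmall (Real.exp_pos 5).le
    _ < 148.42 * (1/0.9936) := by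
        apply mul_lt_mul_of_pos_right exp5_lt; norm_num
    _ < 156.25 := by norm_num

lemma expB : 142.9 < Real.exp 5.007 := by
  have : Real.exp 5 < Real.exp 5.007 := Real.exp_lt_exp.2 (by norm_num)
  linarith [exp5_gt]

/-- The unique positive root λ* of λ = (5 + e^{-3λ})/3 is strictly greater than 5/3,
and satisfies 1.6688 < λ* < 1.669. -/
theorem flower_threshold_bounds (lamstar : ℝ)
    (h : 0 < lamstar ∧ lamstar = (5 + Real.exp (-3 * lamstar)) / 3) :
    5/3 < lamstar ∧ 1.6688 < lamstar ∧ lamstar < 1.669 := by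
  obtain ⟨hpos, heq⟩ := h
  have hexp : Real.exp (-3 * lamstar) = 3 * lamstar - 5 := by linarith [heq]
  have h53 : 5/3 < lamstar := by
    nlinarith [Real.exp_pos (-3 * lamstar)]
  refine ⟨h53, ?_, ?_⟩
  · by_contra hle
    push_neg at hle
    have h1 : Real.exp (-5.0064) ≤ Real.exp (-3 * lamstar) :=
      Real.exp_le_exp.2 (by linarith)
    have h2 : (0.0064 : ℝ) < Real.exp (-5.0064) := by
      rw [Real.exp_neg, inv_eq_one_div, lt_div_iff₀ (Real.exp_pos _)]
      calc (0.0064 : ℝ) * Real.exp 5.0064 < 0.0064 * 156.25 := by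
            apply mul_lt_mul_of_pos_left expA; norm_num
        _ = 1 := by norm_num
    rw [hexp] at h1
    linarith
  · by_contra hge
    push_neg at hge
    have h1 : Real.exp (-3 * lamstar) ≤ Real.exp (-5.007) :=
      Real.exp_le_exp.2 (by linarith)
    have h2 : Real.exp (-5.007) < 0.007 := by
      rw [Real.exp_neg, inv_eq_one_div, div_lt_iff₀ (Real.exp_pos _)]
      calc (1:ℝ) < 0.007 * 142.9 := by norm_num
        _ < 0.007 * Real.exp 5.007 := by
            apply mul_lt_mul_of_pos_left expB; norm_num
    rw [hexp] at h1
    linarith
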